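/- For every integer n ≥ 1, let A_n be the 4×4 matrix with rows (−1−n, −1−n, 0, 0), (−n, −1−n, 0, 0), (0, 0, −1, 0), (0, 0, −1, −1). Then the symmetric matrix A_n + A_nᵀ, viewed as a real matrix, is negative definite; that is, for every nonzero vector x ∈ ℝ⁴ one has xᵀ (A_n + A_nᵀ) x < 0 (equivalently, −(A_n + A_nᵀ) is positive definite). -/

import Mathlib

open Matrix

/-- For every integer `n ≥ 1`, the symmetric matrix `A_n + A_nᵀ` (with `A_n` the
Seifert matrix of `K_n`), viewed as a real matrix, is negative definite:
`xᵀ (A_n + A_nᵀ) x < 0` for every nonzero `x ∈ ℝ⁴`; equivalently,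
`-(A_n + A_nᵀ)` is positive definite. -/
theorem stmt_0 (n : ℤ) (hn : 1 ≤ n)
    (A : Matrix (Fin 4) (Fin 4) ℝ)
    (hA : A = !![-1 - (n : ℝ), -1 - (n : ℝ), 0, 0;
                 -(n : ℝ), -1 - (n : ℝ), 0, 0;
                 0, 0, -1, 0;
                 0, 0, -1, -1]) :
    (∀ x : Fin 4 → ℝ, x ≠ 0 → x ⬝ᵥ (A + Aᵀ).mulVec x < 0) ∧
      (-(A + Aᵀ)).PosDef := by
  have hn' : (1 : ℝ) ≤ (n : ℝ) := by exact_mod_cast hn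
  have hS : A + Aᵀ = !![-2 - 2*(n : ℝ), -1 - 2*(n : ℝ), 0, 0;
                        -1 - 2*(n : ℝ), -2 - 2*(n : ℝ), 0, 0;
                        0, 0, -2, -1;
                        0, 0, -1, -2] := by
    subst hA
    ext i j
    simp only [Matrix.add_apply, Matrix.transpose_apply]
    fin_cases i <;> fin_cases j <;>
      simp [Matrix.cons_val_zero, Matrix.cons_val_one, Matrix.head_cons, Matrix.cons_val_two,
        Matrix.tail_cons, Matrix.cons_val_three, Matrix.head_fin_const, Matrix.vecHead,
        Matrix.vecTail] <;> ring
  have key : ∀ x : Fin 4 → ℝ, x ≠ 0 → x ⬝ᵥ (A + Aᵀ).mulVec x < 0 := by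
    intro x hx
    have hpos : 0 < x 0 ^ 2 + x 1 ^ 2 + x 2 ^ 2 + x 3 ^ 2 := by
      by_contra h
      push_neg at h
      have e0 : x 0 ^ 2 ≤ 0 := by nlinarith [sq_nonneg (x 1), sq_nonneg (x 2), sq_nonneg (x 3)]
      have h0 : x 0 = 0 := sq_eq_zero_iff.mp (le_antisymm e0 (sq_nonneg _))
      have e1 : x 1 ^ 2 ≤ 0 := by nlinarith [sq_nonneg (x 0), sq_nonneg (x 2), sq_nonneg (x 3)]
      have h1 : x 1 = 0 := sq_eq_zero_iff.mp (le_antisymm e1 (sq_nonneg _))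
      have e2 : x 2 ^ 2 ≤ 0 := by nlinarith [sq_nonneg (x 0), sq_nonneg (x 1), sq_nonneg (x 3)]
      have h2 : x 2 = 0 := sq_eq_zero_iff.mp (le_antisymm e2 (sq_nonneg _))
      have e3 : x 3 ^ 2 ≤ 0 := by nlinarith [sq_nonneg (x 0), sq_nonneg (x 1), sq_nonneg (x 2)]
      have h3 : x 3 = 0 := sq_eq_zero_iff.mp (le_antisymm e3 (sq_nonneg _))
      exact hx (funext fun i => by fin_cases i <;> assumption)
    rw [hS]
    have hform : x ⬝ᵥ (!![-2 - 2*(n : ℝ), -1 - 2*(n : ℝ), 0, 0;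
                        -1 - 2*(n : ℝ), -2 - 2*(n : ℝ), 0, 0;
                        0, 0, -2, -1;
                        0, 0, -1, -2]).mulVec x
        = (-2 - 2*(n:ℝ)) * x 0 ^ 2 + 2 * (-1 - 2*(n:ℝ)) * x 0 * x 1
          + (-2 - 2*(n:ℝ)) * x 1 ^ 2 - 2 * x 2 ^ 2 - 2 * x 2 * x 3 - 2 * x 3 ^ 2 := by
      simp [Matrix.mulVec, dotProduct, Fin.sum_univ_four, Matrix.cons_val_zero,
        Matrix.cons_val_one, Matrix.head_cons, Matrix.cons_val_two, Matrix.tail_cons,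
        Matrix.cons_val_three, Matrix.head_fin_const, Matrix.vecHead, Matrix.vecTail]
      ring
    rw [hform]
    nlinarith [mul_nonneg (by linarith : (0:ℝ) ≤ 2 * (n : ℝ)) (sq_nonneg (x 0 + x 1)),
      sq_nonneg (x 0 + x 1), sq_nonneg (x 2 + x 3), hpos]
  refine ⟨key, Matrix.posDef_iff_dotProduct_mulVec.mpr ⟨?_, ?_⟩⟩
  · show (-(A + Aᵀ))ᴴ = -(A + Aᵀ)
    rw [hS]
    ext i j
    fin_cases i <;> fin_cases j <;>
      simp [Matrix.conjTranspose_apply, Matrix.neg_apply, Matrix.cons_val_zero,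
        Matrix.cons_val_one, Matrix.head_cons, Matrix.cons_val_two, Matrix.tail_cons,
        Matrix.cons_val_three, Matrix.head_fin_const, Matrix.vecHead, Matrix.vecTail]
  · intro x hx
    show (0:ℝ) < star x ⬝ᵥ (-(A + Aᵀ)).mulVec x
    rw [star_trivial, Matrix.neg_mulVec, dotProduct_neg]
    linarith [key x hx]
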